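/- Let F : ℝⁿ → ℝ be twice continuously differentiable with Hessian ∇²F satisfying m‖x‖² ≤ xᵀ ∇²F(y) x for all x, y ∈ ℝⁿ (with m > 0) and the Lipschitz bound ‖∇²F(x) − ∇²F(y)‖₂ ≤ L‖x − y‖ in the operator norm. Let χ : ℝⁿ → ℝ be convex, C ⊆ ℝⁿ a convex set, and suppose u* minimizes F + χ over C. For u ∈ ℝⁿ set H = ∇²F(u) and let u⁺ minimize z ↦ (1/2)‖z − (u − H⁻¹ ∇F(u))‖²_H + χ(z) over C (the proximal Newton step with unit step size). Then the step is locally quadratically convergent: ‖u⁺ − u*‖ ≤ (L/(2m)) ‖u − u*‖². -/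

import Mathlib

open Matrix

/-- The squared `H`-norm `‖x‖²_H = xᵀ H x` on Euclidean space. -/
noncomputable def hNormSq {n : ℕ} (H : Matrix (Fin n) (Fin n) ℝ)
    (x : EuclideanSpace ℝ (Fin n)) : ℝ :=
  inner ℝ x (Matrix.toEuclideanLin H x)

open Set Filter
open scoped Topology RealInnerProductSpace

set_option maxHeartbeats 1000000

lemma pnqc_small_le_zero {a c : ℝ} (h : ∀ t : ℝ, 0 < t → t ≤ 1 → a ≤ t * c) : a ≤ 0 := by
  by_contra hpos
  push_neg at hpos
  rcases le_or_gt c 0 with hc | hc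
  · nlinarith [h 1 one_pos le_rfl]
  · have ht : 0 < min 1 (a / (2 * c)) := lt_min one_pos (by positivity)
    have h1 := h _ ht (min_le_left _ _)
    have h2 : min 1 (a / (2 * c)) * c ≤ (a / (2 * c)) * c :=
      mul_le_mul_of_nonneg_right (min_le_right _ _) hc.le
    have h3 : (a / (2 * c)) * c = a / 2 := by field_simp
    nlinarith

-- symmetry of toEuclideanLin for symmetric real matrix
lemma pnqc_symm {n : ℕ} {M : Matrix (Fin n) (Fin n) ℝ} (hM : M.IsSymm)
    (x y : EuclideanSpace ℝ (Fin n)) :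
    ⟪Matrix.toEuclideanLin M x, y⟫ = ⟪x, Matrix.toEuclideanLin M y⟫ := by
  have hherm : M.IsHermitian := by
    rwa [Matrix.IsHermitian, Matrix.conjTranspose_eq_transpose_of_trivial]
  exact (Matrix.isHermitian_iff_isSymmetric.mp hherm) x y

-- expansion of hNormSq
lemma pnqc_expand {n : ℕ} {M : Matrix (Fin n) (Fin n) ℝ} (hM : M.IsSymm)
    (x y : EuclideanSpace ℝ (Fin n)) (t : ℝ) :
    hNormSq M (x + t • y) =
      hNormSq M x + 2 * t * ⟪x, Matrix.toEuclideanLin M y⟫ + t ^ 2 * hNormSq M y := by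
  simp only [hNormSq, map_add, _root_.map_smul, inner_add_left, inner_add_right,
    real_inner_smul_left, real_inner_smul_right]
  have h := pnqc_symm hM y x
  have h2 := real_inner_comm (Matrix.toEuclideanLin M y) x
  linear_combination (-t) * h + (-t) * h2

lemma pnqc_isUnit_det {n : ℕ} {M : Matrix (Fin n) (Fin n) ℝ} {m : ℝ} (hm : 0 < m)
    (hstrong : ∀ x : EuclideanSpace ℝ (Fin n), m * ‖x‖ ^ 2 ≤ hNormSq M x) :
    IsUnit M.det := by
  rw [← Matrix.isUnit_iff_isUnit_det, ← Matrix.mulVec_injective_iff_isUnit]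
  have hker : ∀ v : Fin n → ℝ, M *ᵥ v = 0 → v = 0 := by
    intro v hv
    set x : EuclideanSpace ℝ (Fin n) := (WithLp.equiv 2 (Fin n → ℝ)).symm v with hx
    have h0 : Matrix.toEuclideanLin M x = 0 := by
      show WithLp.toLp 2 (M *ᵥ v) = 0; rw [hv]; rfl
    have h1 := hstrong x
    rw [hNormSq, h0, inner_zero_right] at h1
    have h3 : x = 0 := by
      by_contra hne
      have hpos : 0 < ‖x‖ := norm_pos_iff.mpr hne
      nlinarith [mul_pos hm (mul_pos hpos hpos)]
    have := congrArg (WithLp.equiv 2 (Fin n → ℝ)) h3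
    simpa [hx] using this
  intro a b hab
  have : M *ᵥ (a - b) = 0 := by rw [Matrix.mulVec_sub, hab, sub_self]
  exact sub_eq_zero.mp (hker _ this)

lemma pnqc_taylor {n : ℕ} (g : EuclideanSpace ℝ (Fin n) → EuclideanSpace ℝ (Fin n))
    (A : EuclideanSpace ℝ (Fin n) → (EuclideanSpace ℝ (Fin n) →L[ℝ] EuclideanSpace ℝ (Fin n)))
    (hg : ∀ y, HasFDerivAt g (A y) y) (L : ℝ) (hL : 0 ≤ L)
    (hLip : ∀ x y, ‖A x - A y‖ ≤ L * ‖x - y‖) (p q : EuclideanSpace ℝ (Fin n)) :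
    ‖g q - g p - A p (q - p)‖ ≤ L / 2 * ‖q - p‖ ^ 2 := by
  set d := q - p with hd
  set f : ℝ → EuclideanSpace ℝ (Fin n) := fun t => g (p + t • d) - t • (A p d) with hf
  have hline : ∀ t : ℝ, HasDerivAt (fun s : ℝ => p + s • d) d t := fun t => by
    simpa using ((hasDerivAt_id t).smul_const d).const_add p
  have hf' : ∀ t : ℝ, HasDerivAt f (A (p + t • d) d - A p d) t := fun t => by
    have h1 : HasDerivAt (fun s : ℝ => g (p + s • d)) (A (p + t • d) d) t := by
      exact (hg (p + t • d)).comp_hasDerivAt t (hline t)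
    have h2 : HasDerivAt (fun s : ℝ => s • (A p d)) (A p d) t := by
      simpa using (hasDerivAt_id t).smul_const (A p d)
    exact h1.sub h2
  have hB' : ∀ t : ℝ, HasDerivAt (fun t : ℝ => L * ‖d‖ ^ 2 * (t ^ 2 / 2))
      (L * ‖d‖ ^ 2 * t) t := by
    intro t
    have h := ((hasDerivAt_pow 2 t).div_const 2).const_mul (L * ‖d‖ ^ 2)
    norm_num at h
    convert h using 1
  have key := image_norm_le_of_norm_deriv_right_le_deriv_boundary
    (f := fun t => f t - f 0) (f' := fun t => A (p + t • d) d - A p d) (a := 0) (b := 1)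
    (B := fun t : ℝ => L * ‖d‖ ^ 2 * (t ^ 2 / 2)) (B' := fun t => L * ‖d‖ ^ 2 * t)
    (fun t _ => ((hf' t).sub_const (f 0)).continuousAt.continuousWithinAt)
    (fun x _ => ((hf' x).sub_const (f 0)).hasDerivWithinAt)
    (by simp) hB'
    (fun t ht => by
      have h1 : ‖A (p + t • d) d - A p d‖ ≤ ‖A (p + t • d) - A p‖ * ‖d‖ := by
        rw [← ContinuousLinearMap.sub_apply]
        exact (A (p + t • d) - A p).le_opNorm d
      have h2 : ‖A (p + t • d) - A p‖ ≤ L * ‖t • d‖ := by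
        have h2' := hLip (p + t • d) p
        rwa [show p + t • d - p = t • d by abel] at h2'
      have h3 : ‖t • d‖ = t * ‖d‖ := by
        rw [norm_smul, Real.norm_eq_abs, abs_of_nonneg ht.1]
      rw [h3] at h2
      show ‖A (p + t • d) d - A p d‖ ≤ L * ‖d‖ ^ 2 * t
      calc ‖A (p + t • d) d - A p d‖ ≤ ‖A (p + t • d) - A p‖ * ‖d‖ := h1
        _ ≤ (L * (t * ‖d‖)) * ‖d‖ := mul_le_mul_of_nonneg_right h2 (norm_nonneg d)
        _ = L * ‖d‖ ^ 2 * t := by ring)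
    (right_mem_Icc.2 zero_le_one)
  have hpd : p + d = q := by rw [hd]; abel
  have h0 : f 0 = g p := by simp [hf]
  have h1 : f 1 = g q - A p d := by rw [hf]; simp only [one_smul, hpd]
  have key1 : ‖f 1 - f 0‖ ≤ L * ‖d‖ ^ 2 * (1 ^ 2 / 2) := key
  rw [h0, h1] at key1
  have hre : g q - g p - A p d = g q - A p d - g p := by abel
  rw [hre]
  calc ‖g q - A p d - g p‖ ≤ L * ‖d‖ ^ 2 * (1 ^ 2 / 2) := key1
    _ = L / 2 * ‖d‖ ^ 2 := by ring

lemma pnqc_inv_apply {n : ℕ} {M : Matrix (Fin n) (Fin n) ℝ} (hdet : IsUnit M.det)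
    (x : EuclideanSpace ℝ (Fin n)) :
    Matrix.toEuclideanLin M (Matrix.toEuclideanLin M⁻¹ x) = x := by
  have h1 : Matrix.toEuclideanLin (M * M⁻¹) x =
      Matrix.toEuclideanLin M (Matrix.toEuclideanLin M⁻¹ x) := by
    rw [Matrix.toEuclideanLin_eq_toLin,
      Matrix.toLin_mul (PiLp.basisFun 2 ℝ (Fin n)) (PiLp.basisFun 2 ℝ (Fin n)) _]
    rfl
  rw [← h1, Matrix.mul_nonsing_inv M hdet]
  simp [Matrix.toEuclideanLin_eq_toLin]

/-- Local quadratic convergence of the proximal Newton step with unit step size. Let `F`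
be `C²` with Hessian `∇²F` (given as a matrix-valued map `Hess`, the derivative of the
gradient), satisfying `m‖x‖² ≤ xᵀ ∇²F(y) x` for all `x, y` (with `m > 0`) and the
Lipschitz bound `‖∇²F(x) − ∇²F(y)‖₂ ≤ L‖x − y‖` in the operator norm. Let `χ` be convex,
`C` convex, `u*` a minimizer of `F + χ` over `C`, and for `u ∈ ℝⁿ` put `H = ∇²F(u)` and
let `u⁺` minimize `z ↦ (1/2)‖z − (u − H⁻¹∇F(u))‖²_H + χ(z)` over `C`. Then
`‖u⁺ − u*‖ ≤ (L/(2m))‖u − u*‖²`. -/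
theorem prox_newton_quadratic_convergence (n : ℕ)
    (F : EuclideanSpace ℝ (Fin n) → ℝ) (hF : ContDiff ℝ 2 F)
    (Hess : EuclideanSpace ℝ (Fin n) → Matrix (Fin n) (Fin n) ℝ)
    (hHessSymm : ∀ y, (Hess y).IsSymm)
    (hHessDeriv : ∀ y, HasFDerivAt (gradient F)
      (LinearMap.toContinuousLinearMap (Matrix.toEuclideanLin (Hess y))) y)
    (m L : ℝ) (hm : 0 < m) (hL : 0 ≤ L)
    (hstrong : ∀ x y : EuclideanSpace ℝ (Fin n), m * ‖x‖ ^ 2 ≤ hNormSq (Hess y) x)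
    (hLip : ∀ x y : EuclideanSpace ℝ (Fin n),
      ‖LinearMap.toContinuousLinearMap (Matrix.toEuclideanLin (Hess x)) -
          LinearMap.toContinuousLinearMap (Matrix.toEuclideanLin (Hess y))‖ ≤
        L * ‖x - y‖)
    (χ : EuclideanSpace ℝ (Fin n) → ℝ) (hχ : ConvexOn ℝ Set.univ χ)
    (C : Set (EuclideanSpace ℝ (Fin n))) (hC : Convex ℝ C)
    (ustar : EuclideanSpace ℝ (Fin n)) (hustarC : ustar ∈ C)
    (hustar : ∀ z ∈ C, F ustar + χ ustar ≤ F z + χ z)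
    (u uplus : EuclideanSpace ℝ (Fin n)) (huplusC : uplus ∈ C)
    (huplus : ∀ z ∈ C,
      (1 / 2) * hNormSq (Hess u)
          (uplus - (u - Matrix.toEuclideanLin (Hess u)⁻¹ (gradient F u))) + χ uplus ≤
        (1 / 2) * hNormSq (Hess u)
          (z - (u - Matrix.toEuclideanLin (Hess u)⁻¹ (gradient F u))) + χ z) :
    ‖uplus - ustar‖ ≤ L / (2 * m) * ‖u - ustar‖ ^ 2 := by
  have hdet : IsUnit (Hess u).det := pnqc_isUnit_det hm (fun x => hstrong x u)
  have hinv : ∀ x, Matrix.toEuclideanLin (Hess u) (Matrix.toEuclideanLin (Hess u)⁻¹ x) = x :=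
    pnqc_inv_apply hdet
  set v : EuclideanSpace ℝ (Fin n) :=
    u - Matrix.toEuclideanLin (Hess u)⁻¹ (gradient F u) with hv
  -- Step A: variational inequality for uplus
  have VIA : χ uplus - χ ustar -
      ⟪uplus - v, Matrix.toEuclideanLin (Hess u) (ustar - uplus)⟫ ≤ 0 := by
    apply pnqc_small_le_zero (c := (1 / 2) * hNormSq (Hess u) (ustar - uplus))
    intro t ht ht1
    have hz : uplus + t • (ustar - uplus) ∈ C := by
      have := hC huplusC hustarC (by linarith : (0:ℝ) ≤ 1 - t) ht.le (by ring)
      convert this using 1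
      module
    have h1 := huplus _ hz
    have h2 : uplus + t • (ustar - uplus) - v = (uplus - v) + t • (ustar - uplus) := by
      abel
    rw [h2, pnqc_expand (hHessSymm u)] at h1
    have h3 : χ (uplus + t • (ustar - uplus)) ≤ (1 - t) * χ uplus + t * χ ustar := by
      have := hχ.2 (Set.mem_univ uplus) (Set.mem_univ ustar)
        (by linarith : (0:ℝ) ≤ 1 - t) ht.le (by ring)
      convert this using 2
      · rfl
      · module
      · rfl
      · rfl
    have h4 : t * (χ uplus - χ ustar -
          ⟪uplus - v, Matrix.toEuclideanLin (Hess u) (ustar - uplus)⟫) ≤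
        t * (t * ((1 / 2) * hNormSq (Hess u) (ustar - uplus))) := by nlinarith [h1, h3]
    exact (mul_le_mul_iff_right₀ ht).mp h4
  -- Step B: variational inequality for ustar
  have hFd : HasFDerivAt F (fderiv ℝ F ustar) ustar :=
    ((hF.differentiable (by norm_num)) ustar).hasFDerivAt
  have VIB : χ ustar - χ uplus ≤ ⟪gradient F ustar, uplus - ustar⟫ := by
    set d' : EuclideanSpace ℝ (Fin n) := uplus - ustar with hd'
    set φ : ℝ → ℝ := fun t => F (ustar + t • d') with hφdef
    have hline : HasDerivAt (fun t : ℝ => ustar + t • d') d' 0 := by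
      simpa using ((hasDerivAt_id (0:ℝ)).smul_const d').const_add ustar
    have hφ : HasDerivAt φ (fderiv ℝ F ustar d') 0 := by
      have h0 : ustar + (0:ℝ) • d' = ustar := by simp
      have hFd' : HasFDerivAt F (fderiv ℝ F ustar) (ustar + (0:ℝ) • d') := by
        rw [h0]; exact hFd
      exact hFd'.comp_hasDerivAt 0 hline
    have hgrad : ⟪gradient F ustar, d'⟫ = (fderiv ℝ F ustar) d' := by
      simp only [gradient]
      exact InnerProductSpace.toDual_symm_apply
    have htends : Filter.Tendsto (slope φ 0) (𝓝[>] 0) (𝓝 ((fderiv ℝ F ustar) d')) :=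
      (hasDerivAt_iff_tendsto_slope.mp hφ).mono_left
        (nhdsWithin_mono 0 (fun x hx => ne_of_gt hx))
    have hev : ∀ᶠ t in 𝓝[>] (0:ℝ), χ ustar - χ uplus ≤ slope φ 0 t := by
      filter_upwards [Ioc_mem_nhdsGT zero_lt_one] with t ht
      have hz : ustar + t • d' ∈ C := by
        have := hC hustarC huplusC (by linarith [ht.2] : (0:ℝ) ≤ 1 - t) ht.1.le (by ring)
        convert this using 1
        module
      have h1 := hustar _ hz
      have h3 : χ (ustar + t • d') ≤ (1 - t) * χ ustar + t * χ uplus := by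
        have := hχ.2 (Set.mem_univ ustar) (Set.mem_univ uplus)
          (by linarith [ht.2] : (0:ℝ) ≤ 1 - t) ht.1.le (by ring)
        convert this using 2
        · rfl
        · module
        · rfl
        · rfl
      rw [slope_def_field, sub_zero, le_div_iff₀ ht.1]
      have hφt : φ t = F (ustar + t • d') := rfl
      have hφ0 : φ 0 = F ustar := by simp [hφdef]
      rw [hφt, hφ0]
      nlinarith [h1, h3]
    have := ge_of_tendsto htends hev
    rw [hgrad]
    exact this
  -- Step C: Taylor bound
  have hTaylor : ‖gradient F ustar - gradient F u -
      Matrix.toEuclideanLin (Hess u) (ustar - u)‖ ≤ L / 2 * ‖ustar - u‖ ^ 2 :=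
    pnqc_taylor (gradient F)
      (fun y => LinearMap.toContinuousLinearMap (Matrix.toEuclideanLin (Hess y)))
      hHessDeriv L hL hLip u ustar
  -- Step D: combine
  have hsym := pnqc_symm (hHessSymm u)
  have hid : ⟪uplus - ustar, Matrix.toEuclideanLin (Hess u) (uplus - ustar)⟫ +
      (⟪uplus - v, Matrix.toEuclideanLin (Hess u) (ustar - uplus)⟫ +
        ⟪gradient F ustar, uplus - ustar⟫) =
      ⟪gradient F ustar - gradient F u - Matrix.toEuclideanLin (Hess u) (ustar - u),
        uplus - ustar⟫ := by
    rw [hv]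
    have hq := hinv (gradient F u)
    have hq1 : ⟪Matrix.toEuclideanLin (Hess u)⁻¹ (gradient F u),
        Matrix.toEuclideanLin (Hess u) ustar⟫ = ⟪gradient F u, ustar⟫ := by
      rw [← hsym, hq]
    have hq2 : ⟪Matrix.toEuclideanLin (Hess u)⁻¹ (gradient F u),
        Matrix.toEuclideanLin (Hess u) uplus⟫ = ⟪gradient F u, uplus⟫ := by
      rw [← hsym, hq]
    simp only [map_sub, map_add, inner_sub_left, inner_sub_right, inner_add_left,
      inner_add_right, hq]
    linarith [hq1, hq2,hsym uplus ustar, hsym uplus uplus, hsym ustar ustar, hsym u uplus, hsym u ustar,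
      real_inner_comm (Matrix.toEuclideanLin (Hess u) uplus) ustar,
      real_inner_comm (Matrix.toEuclideanLin (Hess u) ustar) uplus,
      real_inner_comm (Matrix.toEuclideanLin (Hess u) u) uplus,
      real_inner_comm (Matrix.toEuclideanLin (Hess u) u) ustar,
      real_inner_comm (Matrix.toEuclideanLin (Hess u) uplus) uplus,
      real_inner_comm (Matrix.toEuclideanLin (Hess u) ustar) ustar,
      real_inner_comm (gradient F u) uplus, real_inner_comm (gradient F u) ustar,
      real_inner_comm (gradient F ustar) uplus, real_inner_comm (gradient F ustar) ustar]
  have hchain : m * ‖uplus - ustar‖ ^ 2 ≤ (L / 2 * ‖ustar - u‖ ^ 2) * ‖uplus - ustar‖ := by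
    have hQ := hstrong (uplus - ustar) u
    have hQ' : hNormSq (Hess u) (uplus - ustar) =
        ⟪uplus - ustar, Matrix.toEuclideanLin (Hess u) (uplus - ustar)⟫ := rfl
    have hub : ⟪gradient F ustar - gradient F u - Matrix.toEuclideanLin (Hess u) (ustar - u),
        uplus - ustar⟫ ≤ (L / 2 * ‖ustar - u‖ ^ 2) * ‖uplus - ustar‖ := by
      calc _ ≤ ‖gradient F ustar - gradient F u -
            Matrix.toEuclideanLin (Hess u) (ustar - u)‖ * ‖uplus - ustar‖ :=
              real_inner_le_norm _ _
        _ ≤ _ := mul_le_mul_of_nonneg_right hTaylor (norm_nonneg _)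
    linarith [VIA, VIB, hid, hQ, hub]
  rcases (norm_nonneg (uplus - ustar)).eq_or_lt' with h0 | h0
  · calc ‖uplus - ustar‖ = 0 := h0
      _ ≤ L / (2 * m) * ‖u - ustar‖ ^ 2 := by positivity
  · have hnorm : ‖ustar - u‖ = ‖u - ustar‖ := norm_sub_rev _ _
    rw [hnorm] at hchain
    have h5 : m * ‖uplus - ustar‖ ≤ L / 2 * ‖u - ustar‖ ^ 2 := by nlinarith [hchain, h0]
    have h7 : L / (2 * m) * ‖u - ustar‖ ^ 2 = (L / 2 * ‖u - ustar‖ ^ 2) / m := by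
      field_simp
    rw [h7, le_div_iff₀ hm]
    nlinarith [h5]
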